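/- Let ⟨G,M,I⟩ be a formal context with G and M finite, let (A,B) be a concept of ⟨G,M,I⟩, and let S ⊆ M be any set of attributes (selectors). Consider the subcontext ⟨G, B ∪ S, I'⟩, where I' is the restriction of I to G × (B ∪ S). Then (A,B) is a concept of this subcontext, and a concept of the subcontext is an immediate predecessor of (A,B) in the concept lattice of the subcontext if and only if its extent is an inclusion-maximal element of the family FD_{(A,B)} = { β({s}) ∩ A : s ∈ S \ B }; in particular, the map sending each such immediate predecessor to its extent is a bijection between the immediate predecessors of (A,B) in the subcontext and the inclusion-maximal elements of FD_{(A,B)}. -/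
import Mathlib





/-- The intent (derivation) of a set of objects: attributes shared by all of them. -/
def intentOf {G M : Type*} (I : G → M → Prop) (A : Set G) : Set M :=
  {m | ∀ a ∈ A, I a m}

/-- The extent (derivation) of a set of attributes: objects possessing all of them. -/
def extentOf {G M : Type*} (I : G → M → Prop) (B : Set M) : Set G :=
  {g | ∀ b ∈ B, I g b}

/-- A formal concept of the full context ⟨G,M,I⟩, given as a pair (extent, intent). -/
def IsConcept {G M : Type*} (I : G → M → Prop) (c : Set G × Set M) : Prop :=
  intentOf I c.1 = c.2 ∧ extentOf I c.2 = c.1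

/-- A formal concept of the subcontext ⟨G, P', I'⟩ where I' is the restriction of I
to G × P': the intent is a subset of P', the derivation of the extent within P'
is the intent, and the derivation of the intent is the extent. -/
def IsConceptSub {G M : Type*} (I : G → M → Prop) (P' : Set M)
    (c : Set G × Set M) : Prop :=
  c.2 ⊆ P' ∧ intentOf I c.1 ∩ P' = c.2 ∧ extentOf I c.2 = c.1

/-- The order on concepts: strict comparison by inclusion of extents. -/
def ConceptLT {G M : Type*} (c d : Set G × Set M) : Prop := c.1 ⊂ d.1

/-- `c` is an immediate predecessor of `d` in the concept lattice of the
subcontext ⟨G, P', I'⟩. -/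
def IsImmPredSub {G M : Type*} (I : G → M → Prop) (P' : Set M)
    (c d : Set G × Set M) : Prop :=
  IsConceptSub I P' c ∧ ConceptLT c d ∧
    ∀ e, IsConceptSub I P' e → ConceptLT c e → ¬ ConceptLT e d

/-- The family FD_{(A,B)} = { β({s}) ∩ A : s ∈ S \ B }. -/
def FD {G M : Type*} (I : G → M → Prop) (A : Set G) (B S : Set M) : Set (Set G) :=
  {X | ∃ s ∈ S, s ∉ B ∧ X = extentOf I {s} ∩ A}

section Aux
variable {G M : Type*} (I : G → M → Prop)

lemma extent_antitone {B1 B2 : Set M} (h : B1 ⊆ B2) :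
    extentOf I B2 ⊆ extentOf I B1 := fun g hg b hb => hg b (h hb)

lemma intent_antitone {A1 A2 : Set G} (h : A1 ⊆ A2) :
    intentOf I A2 ⊆ intentOf I A1 := fun m hm a ha => hm a (h ha)

lemma subset_extent_intent (X : Set G) : X ⊆ extentOf I (intentOf I X) :=
  fun g hg m hm => hm g hg

lemma subset_intent_extent (D : Set M) : D ⊆ intentOf I (extentOf I D) :=
  fun m hm g hg => hg m hm

lemma mk_concept (P' D : Set M) (hD : D ⊆ P') :
    IsConceptSub I P' (extentOf I D, intentOf I (extentOf I D) ∩ P') := by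
  refine ⟨Set.inter_subset_right, rfl, subset_antisymm ?_ ?_⟩
  · exact extent_antitone I (fun m hm => ⟨subset_intent_extent I D hm, hD hm⟩)
  · exact fun g hg m hm => hm.1 g hg

end Aux

theorem immediate_predecessors_in_subcontext
    {G M : Type*} [Finite G] [Finite M]
    (I : G → M → Prop) (A : Set G) (B : Set M) (S : Set M)
    (hAB : IsConcept I (A, B)) :
    IsConceptSub I (B ∪ S) (A, B) ∧
    (∀ c : Set G × Set M, IsConceptSub I (B ∪ S) c →
      (IsImmPredSub I (B ∪ S) c (A, B) ↔
        (c.1 ∈ FD I A B S ∧ ∀ X ∈ FD I A B S, c.1 ⊆ X → X = c.1))) ∧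
    Set.BijOn Prod.fst
      {c : Set G × Set M | IsConceptSub I (B ∪ S) c ∧ IsImmPredSub I (B ∪ S) c (A, B)}
      {X ∈ FD I A B S | ∀ Y ∈ FD I A B S, X ⊆ Y → Y = X} := by
  obtain ⟨hInt, hExt⟩ := hAB
  simp only at hInt hExt
  set P' := B ∪ S with hP'
  -- (A,B) is a concept of the subcontext
  have h0 : IsConceptSub I P' (A, B) := by
    refine ⟨Set.subset_union_left, ?_, hExt⟩
    show intentOf I A ∩ P' = B
    rw [hInt]
    exact Set.inter_eq_left.mpr Set.subset_union_left
  -- every member of FD is strictly below A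
  have hFDssub : ∀ X ∈ FD I A B S, X ⊂ A := by
    rintro X ⟨s, hsS, hsB, rfl⟩
    refine ⟨Set.inter_subset_right, fun hsub => hsB ?_⟩
    rw [← hInt]
    intro a ha
    exact (hsub ha).1 s rfl
  -- every member of FD is the extent of a subcontext concept
  have key1 : ∀ X ∈ FD I A B S, ∃ c, IsConceptSub I P' c ∧ c.1 = X := by
    rintro X ⟨s, hsS, hsB, rfl⟩
    have hsub : (B ∪ {s} : Set M) ⊆ P' := by
      apply Set.union_subset Set.subset_union_left
      exact Set.singleton_subset_iff.mpr (Set.mem_union_right _ hsS)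
    refine ⟨_, mk_concept I P' (B ∪ {s}) hsub, ?_⟩
    show extentOf I (B ∪ {s}) = extentOf I {s} ∩ A
    ext g
    constructor
    · intro hg
      exact ⟨fun b hb => hg b (Set.mem_union_right _ hb),
        hExt ▸ (fun b hb => hg b (Set.mem_union_left _ hb))⟩
    · rintro ⟨h1, h2⟩ b hb
      rcases hb with hb | hb
      · exact (hExt ▸ h2 : g ∈ extentOf I B) b hb
      · exact h1 b hb
  -- every subcontext concept strictly below A is dominated by a member of FD
  have key2 : ∀ c : Set G × Set M, IsConceptSub I P' c → c.1 ⊂ A →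
      ∃ X ∈ FD I A B S, c.1 ⊆ X := by
    rintro ⟨C, D⟩ ⟨hDP, hCD, hDC⟩ hlt
    simp only at hDP hCD hDC ⊢
    have hBD : B ⊆ D := by
      rw [← hCD]
      exact fun b hb => ⟨intent_antitone I hlt.1 (hInt ▸ hb), Set.mem_union_left _ hb⟩
    have hDne : D ≠ B := by
      intro h
      rw [h, hExt] at hDC
      exact hlt.2 (hDC ▸ subset_rfl)
    obtain ⟨s, hsD, hsB⟩ : ∃ s ∈ D, s ∉ B := by
      by_contra h
      push_neg at h
      exact hDne (subset_antisymm h hBD)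
    have hsS : s ∈ S := (hDP hsD).resolve_left hsB
    refine ⟨extentOf I {s} ∩ A, ⟨s, hsS, hsB, rfl⟩, fun g hg => ?_⟩
    refine ⟨fun b hb => ?_, hlt.1 hg⟩
    rw [Set.mem_singleton_iff] at hb
    have hgD : g ∈ extentOf I D := by rw [hDC]; exact hg
    rw [hb]
    exact hgD s hsD
  -- the main characterization
  have hmain : ∀ c : Set G × Set M, IsConceptSub I P' c →
      (IsImmPredSub I P' c (A, B) ↔
        (c.1 ∈ FD I A B S ∧ ∀ X ∈ FD I A B S, c.1 ⊆ X → X = c.1)) := by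
    intro c hc
    constructor
    · rintro ⟨-, hlt, himm⟩
      have hltA : c.1 ⊂ A := hlt
      obtain ⟨X, hXFD, hcX⟩ := key2 c hc hltA
      have hXA : X ⊂ A := hFDssub X hXFD
      have hXeq : c.1 = X := by
        by_contra hne
        obtain ⟨e, he, he1⟩ := key1 X hXFD
        refine himm e he ?_ ?_
        · show c.1 ⊂ e.1; rw [he1]; exact ssubset_of_subset_of_ne hcX hne
        · show e.1 ⊂ A; rw [he1]; exact hXA
      constructor
      · exact hXeq ▸ hXFD
      · intro Y hYFD hcY
        by_contra hne
        obtain ⟨e, he, he1⟩ := key1 Y hYFD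
        refine himm e he ?_ ?_
        · show c.1 ⊂ e.1; rw [he1]; exact ssubset_of_subset_of_ne hcY (Ne.symm hne)
        · show e.1 ⊂ A; rw [he1]; exact hFDssub Y hYFD
    · rintro ⟨hcFD, hmax⟩
      refine ⟨hc, hFDssub c.1 hcFD, ?_⟩
      rintro e he hce heA
      obtain ⟨X, hXFD, heX⟩ := key2 e he heA
      have : X = c.1 := hmax X hXFD (hce.1.trans heX)
      exact hce.2 (heX.trans this.subset)
  refine ⟨h0, hmain, ?_, ?_, ?_⟩
  · rintro c ⟨hc, himm⟩
    exact (hmain c hc).mp himm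
  · rintro c ⟨hc, himm⟩ c' ⟨hc', himm'⟩ h1
    have h2 : c.2 = c'.2 := by
      rw [← hc.2.1, ← hc'.2.1, h1]
    exact Prod.ext h1 h2
  · rintro X ⟨hXFD, hmax⟩
    obtain ⟨c, hc, hc1⟩ := key1 X hXFD
    refine ⟨c, ⟨hc, (hmain c hc).mpr ⟨hc1 ▸ hXFD, ?_⟩⟩, hc1⟩
    intro Y hY hsub
    rw [hc1] at hsub ⊢
    exact hmax Y hY hsub
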